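/- Let R be a commutative Bezout domain, let a be a neat element of R, and suppose a = xy for some x, y ∈ R. Then x is a neat element of R. -/
import Mathlib

/-- An element `a` of a commutative Bezout domain is neat if for all `b, c` with
`bR + cR = R` there exist `r, s` with `a = r * s`, `rR + bR = R`, `sR + cR = R` and
`rR + sR = R`. -/
def IsNeatElement {R : Type*} [CommRing R] (a : R) : Prop :=
  ∀ b c : R, Ideal.span {b} + Ideal.span {c} = ⊤ →
    ∃ r s : R, a = r * s ∧
      Ideal.span {r} + Ideal.span {b} = ⊤ ∧
      Ideal.span {s} + Ideal.span {c} = ⊤ ∧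
      Ideal.span {r} + Ideal.span {s} = ⊤

theorem divisor_of_neat_is_neat {R : Type*} [CommRing R] [IsDomain R] [IsBezout R]
    (a x y : R) (hneat : IsNeatElement a) (hxy : a = x * y) :
    IsNeatElement x := by
  classical
  letI : GCDMonoid R := IsBezout.toGCDDomain R
  intro b c hbc
  obtain ⟨r, s, hrs, hrb, hsc, hrs'⟩ := hneat b c hbc
  have hdvd : x ∣ r * s := ⟨y, by rw [← hrs, hxy]⟩
  obtain ⟨d₁, d₂, hd₁, hd₂, hx⟩ := exists_dvd_and_dvd_of_dvd_mul hdvd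
  rw [← Ideal.one_eq_top, ← Ideal.isCoprime_iff_add,
    Ideal.isCoprime_span_singleton_iff] at hrb hsc hrs'
  refine ⟨d₁, d₂, hx, ?_, ?_, ?_⟩ <;>
    rw [← Ideal.one_eq_top, ← Ideal.isCoprime_iff_add, Ideal.isCoprime_span_singleton_iff]
  · exact hrb.of_isCoprime_of_dvd_left hd₁
  · exact hsc.of_isCoprime_of_dvd_left hd₂
  · exact (hrs'.of_isCoprime_of_dvd_left hd₁).of_isCoprime_of_dvd_right hd₂
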